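/- Under the hypotheses of the semi-orthogonal decomposition data (exact categories E with extension-closed subcategories A, B, exact functors p: E → A, q: E → B and a natural exact sequence p(x) ↣ x ↠ q(x) whose inclusion is the counit of an adjunction with the inclusion of A and whose projection is the unit of an adjunction with the inclusion of B), for every exact category D precomposition with q induces a fully faithful functor from the category of exact functors B → D to the category of exact functors E → D, whose essential image consists precisely of the exact functors E → D sending every object of A to a zero object. -/

import Mathlib

/-!
Basic definitions: exact (∞-)categories à la Barwick (1-categorical formalization).
An exact structure on an additive category consists of two wide subcategories of
"inclusions" and "projections" subject to the axioms below.
-/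

open CategoryTheory CategoryTheory.Limits

universe w v u v₂ u₂

namespace ExactPaper

variable {E : Type u} [Category.{v} E]

/-- `ι` is a kernel of `f`. -/
def IsKernelι [Preadditive E] {k x y : E} (ι : k ⟶ x) (f : x ⟶ y) : Prop :=
  ∃ w : ι ≫ f = 0, Nonempty (IsLimit (KernelFork.ofι ι w))

/-- `π` is a cokernel of `f`. -/
def IsCokernelπ [Preadditive E] {x y c : E} (f : x ⟶ y) (π : y ⟶ c) : Prop :=
  ∃ w : f ≫ π = 0, Nonempty (IsColimit (CokernelCofork.ofπ π w))

/-- An exact structure on an additive category `E`: two wide subcategories of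
inclusions (`↣`) and projections (`↠`) satisfying Barwick's axioms.  In the axiom
`exact_square`, the square has top edge `i : x ⟶ y`, left edge `p : x ⟶ x'`,
right edge `q : y ⟶ y'` and bottom edge `j : x' ⟶ y'`. -/
structure ExactStructure (E : Type u) [Category.{v} E] [Preadditive E] where
  /-- the class of inclusions -/
  IsIncl : ∀ ⦃x y : E⦄, (x ⟶ y) → Prop
  /-- the class of projections -/
  IsProj : ∀ ⦃x y : E⦄, (x ⟶ y) → Prop
  incl_id : ∀ x : E, IsIncl (𝟙 x)
  incl_comp : ∀ {x y z : E} (f : x ⟶ y) (g : y ⟶ z), IsIncl f → IsIncl g → IsIncl (f ≫ g)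
  proj_id : ∀ x : E, IsProj (𝟙 x)
  proj_comp : ∀ {x y z : E} (f : x ⟶ y) (g : y ⟶ z), IsProj f → IsProj g → IsProj (f ≫ g)
  incl_from_zero : ∀ {z x : E}, IsZero z → ∀ f : z ⟶ x, IsIncl f
  proj_to_zero : ∀ {x z : E}, IsZero z → ∀ f : x ⟶ z, IsProj f
  /-- pushouts of inclusions along arbitrary morphisms exist -/
  pushout_incl : ∀ {x y x' : E} (i : x ⟶ y) (f : x ⟶ x'), IsIncl i →
    ∃ (y' : E) (g : y ⟶ y') (j : x' ⟶ y'), IsPushout i f g j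
  /-- inclusions are stable under pushout -/
  incl_pushout_stable : ∀ {x y x' y' : E} {i : x ⟶ y} {f : x ⟶ x'} {g : y ⟶ y'} {j : x' ⟶ y'},
    IsPushout i f g j → IsIncl i → IsIncl j
  /-- pullbacks of projections along arbitrary morphisms exist -/
  pullback_proj : ∀ {y z z' : E} (p : y ⟶ z) (f : z' ⟶ z), IsProj p →
    ∃ (y' : E) (g : y' ⟶ y) (q : y' ⟶ z'), IsPullback g q p f
  /-- projections are stable under pullback -/
  proj_pullback_stable : ∀ {y' z' y z : E} {g : y' ⟶ y} {q : y' ⟶ z'} {p : y ⟶ z} {f : z' ⟶ z},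
    IsPullback g q p f → IsProj p → IsProj q
  /-- compatibility: the pushout and pullback descriptions of exact squares agree -/
  exact_square : ∀ {x y x' y' : E} (i : x ⟶ y) (p : x ⟶ x') (q : y ⟶ y') (j : x' ⟶ y'),
    i ≫ q = p ≫ j →
    ((IsIncl i ∧ IsProj p ∧ IsPushout i p q j) ↔ (IsIncl j ∧ IsProj q ∧ IsPullback i p q j))

/-- An exact sequence `x ↣ y ↠ z`: an inclusion which is a kernel of a projection
which is in turn a cokernel of the inclusion. -/
def IsExactSeq [Preadditive E] (S : ExactStructure E) {x y z : E} (i : x ⟶ y) (p : y ⟶ z) :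
    Prop :=
  S.IsIncl i ∧ S.IsProj p ∧ IsKernelι i p ∧ IsCokernelπ i p

end ExactPaper

namespace ExactPaper

variable {E : Type u} [Category.{v} E] [Preadditive E]
variable {D : Type u₂} [Category.{v₂} D] [Preadditive D]

/-- A functor `E ⥤ D` between exact categories is exact if it preserves zero objects and
sends exact sequences to exact sequences. -/
def IsExactFunctor (S : ExactStructure E) (T : ExactStructure D) (F : E ⥤ D) : Prop :=
  (∀ x : E, IsZero x → IsZero (F.obj x)) ∧
  ∀ {x y z : E} (i : x ⟶ y) (π : y ⟶ z), IsExactSeq S i π →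
    IsExactSeq T (F.map i) (F.map π)

/-- A functor from an extension-closed full subcategory `U ⊆ E` (with its induced exact
structure) to an exact category `D` is exact if it preserves zero objects and sends the
induced exact sequences — i.e. the sequences of `U` which are exact in `E` — to exact
sequences of `D`. -/
def IsExactFunctorOnSub (S : ExactStructure E) (U : E → Prop) (T : ExactStructure D)
    (F : ObjectProperty.FullSubcategory U ⥤ D) : Prop :=
  (∀ u : ObjectProperty.FullSubcategory U, IsZero u → IsZero (F.obj u)) ∧
  ∀ {x y z : ObjectProperty.FullSubcategory U} (i : x ⟶ y) (π : y ⟶ z),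
    IsExactSeq S ((ObjectProperty.ι U).map i) ((ObjectProperty.ι U).map π) →
    IsExactSeq T (F.map i) (F.map π)

section Aux

variable {C : Type*} [Category C]

/-- An object of a full subcategory whose underlying object is zero is zero. -/
lemma isZero_of_isZero_obj {U : C → Prop} {u : ObjectProperty.FullSubcategory U} (h : IsZero u.obj) :
    IsZero u :=
  ⟨fun v => ⟨⟨⟨ObjectProperty.homMk (h.to_ v.obj)⟩, fun f => by ext; exact h.eq_of_src _ _⟩⟩,
    fun v => ⟨⟨⟨ObjectProperty.homMk (h.from_ v.obj)⟩, fun f => by ext; exact h.eq_of_tgt _ _⟩⟩⟩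

/-- If a full subcategory contains a zero object of the ambient category, then any
zero object of the subcategory has zero underlying object. -/
lemma isZero_obj_of_isZero {U : C → Prop} {z : C} (hz : IsZero z) (hU : U z)
    {u : ObjectProperty.FullSubcategory U} (hu : IsZero u) : IsZero u.obj := by
  have hz' : IsZero (⟨z, hU⟩ : ObjectProperty.FullSubcategory U) := isZero_of_isZero_obj hz
  exact hz.of_iso ((ObjectProperty.ι U).mapIso (hu.iso hz'))

variable [Preadditive C]

/-- A cokernel of a zero morphism is an isomorphism. -/
lemma isIso_of_isCokernelπ_of_eq_zero {x y z : C} {f : x ⟶ y} {π : y ⟶ z}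
    (hf : f = 0) (h : IsCokernelπ f π) : IsIso π := by
  obtain ⟨w, ⟨hc⟩⟩ := h
  have hepi : Epi π := by
    have := epi_of_isColimit_cofork hc
    simpa using this
  obtain ⟨d, hd⟩ := Cofork.IsColimit.desc' hc (𝟙 y) (by simp [hf])
  have hd' : π ≫ d = 𝟙 y := by simpa using hd
  refine ⟨d, hd', ?_⟩
  rw [← cancel_epi π]
  simp [reassoc_of% hd']

/-- The cokernel of an isomorphism is zero. -/
lemma isZero_of_isCokernelπ_of_isIso {x y z : C} {f : x ⟶ y} {π : y ⟶ z}
    (hf : IsIso f) (h : IsCokernelπ f π) : IsZero z := by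
  obtain ⟨w, ⟨hc⟩⟩ := h
  have hepi : Epi π := by
    have := epi_of_isColimit_cofork hc
    simpa using this
  have hπ : π = 0 := by
    have := w
    rw [← cancel_epi f]
    simpa using this
  have hid : 𝟙 z = 0 := by
    rw [← cancel_epi π]
    simp [hπ]
  rw [IsZero.iff_id_eq_zero]
  exact hid

end Aux

/-- Given semi-orthogonal decomposition data on an exact category `E`
(extension-closed subcategories `A`, `B`, exact functors `p : E ⥤ A`, `q : E ⥤ B`, and a
natural exact sequence `p(x) ↣ x ↠ q(x)` realising the counit of `incl ⊣ p` and the unit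
of `q ⊣ incl`), for every exact category `D` precomposition with `q` induces a fully
faithful functor `Fun^ex(B, D) ⥤ Fun^ex(E, D)` whose essential image consists precisely
of the exact functors `E ⥤ D` sending every object of `A` to a zero object. -/
theorem verdier_quotient_universal_property
    (S : ExactStructure E) (T : ExactStructure D) (A B : E → Prop)
    (hA₀ : ∃ z : E, IsZero z ∧ A z)
    (hAext : ∀ {u y w : E} (i : u ⟶ y) (π : y ⟶ w), IsExactSeq S i π → A u → A w → A y)
    (hB₀ : ∃ z : E, IsZero z ∧ B z)
    (hBext : ∀ {u y w : E} (i : u ⟶ y) (π : y ⟶ w), IsExactSeq S i π → B u → B w → B y)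
    (p : E ⥤ ObjectProperty.FullSubcategory A) (adjA : ObjectProperty.ι A ⊣ p)
    (q : E ⥤ ObjectProperty.FullSubcategory B) (adjB : q ⊣ ObjectProperty.ι B)
    (hseq : ∀ x : E, IsExactSeq S (adjA.counit.app x) (adjB.unit.app x))
    (hp_zero : ∀ x : E, IsZero x → IsZero ((p ⋙ ObjectProperty.ι A).obj x))
    (hp_exact : ∀ {x y z : E} (i : x ⟶ y) (π : y ⟶ z), IsExactSeq S i π →
      IsExactSeq S ((p ⋙ ObjectProperty.ι A).map i)
        ((p ⋙ ObjectProperty.ι A).map π))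
    (hq_zero : ∀ x : E, IsZero x → IsZero ((q ⋙ ObjectProperty.ι B).obj x))
    (hq_exact : ∀ {x y z : E} (i : x ⟶ y) (π : y ⟶ z), IsExactSeq S i π →
      IsExactSeq S ((q ⋙ ObjectProperty.ι B).map i)
        ((q ⋙ ObjectProperty.ι B).map π)) :
    ∃ (Φ : ObjectProperty.FullSubcategory (IsExactFunctorOnSub S B T) ⥤
        ObjectProperty.FullSubcategory (IsExactFunctor S T)),
      Nonempty (Φ ⋙ ObjectProperty.ι (IsExactFunctor S T) ≅
        ObjectProperty.ι (IsExactFunctorOnSub S B T) ⋙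
          (Functor.whiskeringLeft E (ObjectProperty.FullSubcategory B) D).obj q) ∧
      Φ.Full ∧ Φ.Faithful ∧
      (∀ G : ObjectProperty.FullSubcategory (IsExactFunctor S T),
        (∃ F, Nonempty (Φ.obj F ≅ G)) ↔ (∀ a : E, A a → IsZero (G.obj.obj a))) := by
  obtain ⟨z₀, hz₀, hz₀B⟩ := hB₀
  -- the counit of `q ⊣ incl B` is an isomorphism since the inclusion is fully faithful
  haveI : IsIso adjB.counit := adjB.counit_isIso_of_R_fully_faithful
  haveI : IsIso adjA.unit := adjA.unit_isIso_of_L_fully_faithful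
  -- precomposition with `q`
  set W : (ObjectProperty.FullSubcategory B ⥤ D) ⥤ (E ⥤ D) :=
    (Functor.whiskeringLeft E (ObjectProperty.FullSubcategory B) D).obj q with hW
  -- `W` is faithful
  haveI hWfaith : W.Faithful := by
    constructor
    intro F₁ F₂ α β h
    ext b
    have hα := α.naturality (adjB.counit.app b)
    have hβ := β.naturality (adjB.counit.app b)
    simp only [Functor.comp_obj, Functor.id_obj] at hα hβ
    have hb : α.app (q.obj ((ObjectProperty.ι B).obj b)) =
        β.app (q.obj ((ObjectProperty.ι B).obj b)) :=
      congr_fun (congr_arg NatTrans.app h) ((ObjectProperty.ι B).obj b)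
    haveI : IsIso (F₁.map (adjB.counit.app b)) := inferInstance
    rw [← cancel_epi (F₁.map (adjB.counit.app b))]
    rw [hα, hβ, hb]
  -- `W` is full
  haveI hWfull : W.Full := by
    constructor
    intro F₁ F₂ γ
    refine ⟨⟨fun b => inv (F₁.map (adjB.counit.app b)) ≫
      γ.app ((ObjectProperty.ι B).obj b) ≫ F₂.map (adjB.counit.app b), ?_⟩, ?_⟩
    · intro b b' f
      have hε := adjB.counit.naturality f
      simp only [Functor.comp_map, Functor.id_map] at hε
      have h1 : F₁.map (q.map ((ObjectProperty.ι B).map f)) ≫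
          F₁.map (adjB.counit.app b') = F₁.map (adjB.counit.app b) ≫ F₁.map f := by
        rw [← F₁.map_comp, ← F₁.map_comp, hε]
      have h3 : F₂.map (q.map ((ObjectProperty.ι B).map f)) ≫
          F₂.map (adjB.counit.app b') = F₂.map (adjB.counit.app b) ≫ F₂.map f := by
        rw [← F₂.map_comp, ← F₂.map_comp, hε]
      have h2 : F₁.map (q.map ((ObjectProperty.ι B).map f)) ≫
          γ.app ((ObjectProperty.ι B).obj b') =
          γ.app ((ObjectProperty.ι B).obj b) ≫
            F₂.map (q.map ((ObjectProperty.ι B).map f)) :=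
        γ.naturality ((ObjectProperty.ι B).map f)
      have key : F₁.map f ≫ inv (F₁.map (adjB.counit.app b')) =
          inv (F₁.map (adjB.counit.app b)) ≫
            F₁.map (q.map ((ObjectProperty.ι B).map f)) := by
        rw [IsIso.comp_inv_eq, Category.assoc, h1, IsIso.inv_hom_id_assoc]
      simp only [Category.assoc]
      rw [reassoc_of% key, reassoc_of% h2, h3]
    · ext x
      have htri : q.map (adjB.unit.app x) ≫
          adjB.counit.app (q.obj x) = 𝟙 (q.obj x) :=
        adjB.left_triangle_components x
      have h1 : F₁.map (q.map (adjB.unit.app x)) =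
          inv (F₁.map (adjB.counit.app (q.obj x))) := by
        apply IsIso.eq_inv_of_inv_hom_id
        rw [← F₁.map_comp, htri]
        simp
      have h2 : F₁.map (q.map (adjB.unit.app x)) ≫
          γ.app ((ObjectProperty.ι B).obj (q.obj x)) =
          γ.app x ≫ F₂.map (q.map (adjB.unit.app x)) :=
        γ.naturality (adjB.unit.app x)
      show inv (F₁.map (adjB.counit.app (q.obj x))) ≫
          γ.app ((ObjectProperty.ι B).obj (q.obj x)) ≫
          F₂.map (adjB.counit.app (q.obj x)) = γ.app x
      rw [← h1, reassoc_of% h2, ← F₂.map_comp, htri]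
      rw [F₂.map_id]
      exact Category.comp_id (γ.app x)
  -- the lifted functor is well defined
  have hΦok : ∀ F : ObjectProperty.FullSubcategory (IsExactFunctorOnSub S B T),
      IsExactFunctor S T ((ObjectProperty.ι (IsExactFunctorOnSub S B T) ⋙ W).obj F) := by
    intro F
    constructor
    · intro x hx
      have h1 : IsZero ((q ⋙ ObjectProperty.ι B).obj x) := hq_zero x hx
      exact F.property.1 _ (isZero_of_isZero_obj h1)
    · intro x y zz i π h
      exact F.property.2 (q.map i) (q.map π) (hq_exact i π h)
  refine ⟨ObjectProperty.lift _ (ObjectProperty.ι _ ⋙ W) hΦok,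
    ⟨ObjectProperty.liftCompιIso _ _ _⟩, inferInstance, inferInstance, ?_⟩
  set Φ := ObjectProperty.lift _ (ObjectProperty.ι
    (IsExactFunctorOnSub S B T) ⋙ W) hΦok with hΦ
  intro G
  constructor
  · rintro ⟨F, ⟨e⟩⟩ a ha
    -- the counit of `incl A ⊣ p` at `a` is an isomorphism since `a ∈ A`
    have htri := adjA.left_triangle_components (⟨a, ha⟩ : ObjectProperty.FullSubcategory A)
    haveI : IsIso ((ObjectProperty.ι A).map
        (adjA.unit.app (⟨a, ha⟩ : ObjectProperty.FullSubcategory A))) := inferInstance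
    haveI : IsIso ((ObjectProperty.ι A).map
        (adjA.unit.app (⟨a, ha⟩ : ObjectProperty.FullSubcategory A)) ≫
        adjA.counit.app ((ObjectProperty.ι A).obj ⟨a, ha⟩)) := by
      rw [htri]; exact IsIso.id _
    have hiso : IsIso (adjA.counit.app a) :=
      IsIso.of_isIso_comp_left
        ((ObjectProperty.ι A).map (adjA.unit.app (⟨a, ha⟩ : ObjectProperty.FullSubcategory A)))
        (adjA.counit.app ((ObjectProperty.ι A).obj ⟨a, ha⟩))
    -- hence `q a` is a zero object
    have hqa : IsZero ((ObjectProperty.ι B).obj (q.obj a)) :=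
      isZero_of_isCokernelπ_of_isIso hiso (hseq a).2.2.2
    have hqa' : IsZero (q.obj a) := isZero_of_isZero_obj hqa
    have hFqa : IsZero (F.obj.obj (q.obj a)) := F.property.1 _ hqa'
    -- transport along the isomorphism `Φ.obj F ≅ G`
    have e' : (Φ.obj F).obj ≅ G.obj :=
      (ObjectProperty.ι (IsExactFunctor S T)).mapIso e
    exact hFqa.of_iso (e'.symm.app a)
  · intro hG
    have hF : IsExactFunctorOnSub S B T (ObjectProperty.ι B ⋙ G.obj) := by
      constructor
      · intro u hu
        exact G.property.1 _ (isZero_obj_of_isZero hz₀ hz₀B hu)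
      · intro x y zz i π h
        exact G.property.2 _ _ h
    refine ⟨⟨ObjectProperty.ι B ⋙ G.obj, hF⟩, ⟨?_⟩⟩
    -- `G` maps each unit `x ⟶ incl (q x)` to an isomorphism
    have hunit : ∀ x : E, IsIso (G.obj.map (adjB.unit.app x)) := by
      intro x
      have hz : IsZero (G.obj.obj ((ObjectProperty.ι A).obj (p.obj x))) :=
        hG _ (p.obj x).property
      have hexG := G.property.2 _ _ (hseq x)
      exact isIso_of_isCokernelπ_of_eq_zero (hz.eq_of_src _ _) hexG.2.2.2
    haveI := hunit
    have niso : (Φ.obj ⟨ObjectProperty.ι B ⋙ G.obj, hF⟩).obj ≅ G.obj := by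
      refine NatIso.ofComponents
        (fun x => (asIso (G.obj.map (adjB.unit.app x))).symm) ?_
      intro x y f
      have hnat := adjB.unit.naturality f
      simp only [Functor.id_map, Functor.comp_map] at hnat
      show G.obj.map ((ObjectProperty.ι B).map (q.map f)) ≫
          inv (G.obj.map (adjB.unit.app y)) =
          inv (G.obj.map (adjB.unit.app x)) ≫ G.obj.map f
      rw [IsIso.comp_inv_eq, Category.assoc, IsIso.eq_inv_comp,
        ← G.obj.map_comp, ← G.obj.map_comp, hnat]
    exact (ObjectProperty.ι (IsExactFunctor S T)).preimageIso niso

end ExactPaper
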